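/- The underformula characterizes the union of classes up to the first class containing models of S: if C = ∅ lex(L_1) ... lex(L_n) and i is the least index such that C(i)∩Mod(S) ≠ ∅, then C(0)∪...∪C(i) = Mod(under(S; L_n,...,L_1)). -/

import Mathlib

open Set
open scoped Classical

variable {M : Type*}

namespace BeliefRevision

/-- `minSet C P`: the minimal models of `P` according to the total preorder `C`,
i.e. `C(i) ∩ Mod(P)` for the least `i` making this nonempty. -/
noncomputable def minSet : List (Set M) → Set M → Set M
  | [], _ => ∅
  | X :: rest, P => if (X ∩ P).Nonempty then X ∩ P else minSet rest P

/-- Equivalence of total preorders: same minimal models for every formula. -/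
def equivC (C C' : List (Set M)) : Prop :=
  ∀ P : Set M, minSet C P = minSet C' P

/-- A total preorder: an ordered partition (empty classes allowed) of all models. -/
def IsPartition (C : List (Set M)) : Prop :=
  C.Pairwise Disjoint ∧ C.foldr (· ∪ ·) ∅ = Set.univ

/-- Lexicographic revision. -/
def lex (C : List (Set M)) (L : Set M) : List (Set M) :=
  C.map (· ∩ L) ++ C.map (· \ L)

/-- Refinement. -/
def refi (C : List (Set M)) (R : Set M) : List (Set M) :=
  C.flatMap fun X => [X ∩ R, X \ R]

/-- Natural revision: `[C(i)∩P, C(0),...,C(i-1), C(i)\P, C(i+1),...,C(m)]`. -/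
noncomputable def natr : List (Set M) → Set M → List (Set M)
  | [], _ => []
  | X :: rest, P =>
    if (X ∩ P).Nonempty then (X ∩ P) :: (X \ P) :: rest
    else
      match natr rest P with
      | a :: r => a :: X :: r
      | [] => [X]

/-- Severe antiwithdrawal: merge classes `0..i` where `i` is least with `C(i)∩P ≠ ∅`. -/
noncomputable def sevw : List (Set M) → Set M → List (Set M)
  | [], _ => []
  | X :: rest, P =>
    if (X ∩ P).Nonempty then X :: rest
    else
      match sevw rest P with
      | a :: r => (X ∪ a) :: r
      | [] => [X]

/-- Restrained revision. -/
noncomputable def res : List (Set M) → Set M → List (Set M)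
  | [], _ => []
  | X :: rest, P =>
    if (X ∩ P).Nonempty then
      (X ∩ P) :: (X \ P) :: rest.flatMap (fun Y => [Y ∩ P, Y \ P])
    else
      match res rest P with
      | a :: r => a :: (X ∩ P) :: (X \ P) :: r
      | [] => [X ∩ P, X \ P]

/-- Very radical revision. -/
def rad (C : List (Set M)) (P : Set M) : List (Set M) :=
  C.map (· ∩ P) ++ [C.foldr (· ∪ ·) ∅ \ P]

/-- Severe revision: `[C(i)∩P, (C(0)∪...∪C(i))\P, C(i+1),...,C(m)]`. -/
noncomputable def sevr : List (Set M) → Set M → List (Set M)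
  | [], _ => []
  | X :: rest, P =>
    if (X ∩ P).Nonempty then (X ∩ P) :: (X \ P) :: rest
    else
      match sevr rest P with
      | a :: b :: r => a :: (X ∪ b) :: r
      | l => X :: l

/-- Moderate severe revision. -/
noncomputable def msev (C : List (Set M)) (P : Set M) : List (Set M) :=
  C.map (· ∩ P) ++ (sevw C P).map (· \ P)

/-- Merge `A` with the first nonempty class of the list (helper for `psev`). -/
noncomputable def mergeJ (A : Set M) : List (Set M) → List (Set M)
  | [] => [A]
  | Y :: r => if Y.Nonempty then (A ∪ Y) :: r else mergeJ A r

/-- Plain severe revision: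
`[C(i)∩P, C(0)∪...∪(C(i)\P)∪C(j), C(j+1),...,C(m)]` with `i` least with
`C(i)∩P ≠ ∅` and `j` the least index `> i` with `C(j) ≠ ∅`. -/
noncomputable def psev : List (Set M) → Set M → List (Set M)
  | [], _ => []
  | X :: rest, P =>
    if (X ∩ P).Nonempty then (X ∩ P) :: mergeJ (X \ P) rest
    else
      match psev rest P with
      | a :: b :: r => a :: (X ∪ b) :: r
      | l => X :: l

/-- Full meet revision. -/
noncomputable def full (C : List (Set M)) (P : Set M) : List (Set M) :=
  [minSet C P, Set.univ \ minSet C P]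

/-- `maxset F [F₁,...,Fₖ]`: conjoin each `Fᵢ` in order whenever consistent. -/
noncomputable def maxset : Set M → List (Set M) → Set M
  | F, [] => F
  | F, L :: rest => maxset (if (F ∩ L).Nonempty then F ∩ L else F) rest

/-- The underformula `under(S; Lₙ,...,L₁)`. -/
noncomputable def under : Set M → List (Set M) → Set M
  | _, [] => Set.univ
  | S, L :: rest =>
    if (S ∩ L).Nonempty then L ∩ under (S ∩ L) rest else L ∪ under S rest

/-- `upTo C S = C(0) ∪ ... ∪ C(i)` where `i` is least with `C(i)∩S ≠ ∅`. -/
noncomputable def upTo : List (Set M) → Set M → Set M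
  | [], _ => ∅
  | X :: rest, S => if (X ∩ S).Nonempty then X else X ∪ upTo rest S

noncomputable def longestAux : Set M → List (Set M) → Set M
  | A, [] => A
  | A, L :: rest => if (A ∩ L).Nonempty then longestAux (A ∩ L) rest else A

/-- Longest consistent conjunction of a sequence of formulas. -/
noncomputable def longest : List (Set M) → Set M
  | [] => Set.univ
  | L :: rest => longestAux L rest

/-- `rev` is a bottom-refining revision on `(C,P)`: it is a revision
(`min(C rev(P),⊤) = min(C,P)`) and, whenever `C(0)∩Mod(P) ≠ ∅`, class zero of
the result is `C(0)∩Mod(P)` and class one is `C(0)\Mod(P)`. -/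
noncomputable def BottomRefining (rev : List (Set M) → Set M → List (Set M))
    (C : List (Set M)) (P : Set M) : Prop :=
  minSet (rev C P) Set.univ = minSet C P ∧
  ((C.getD 0 ∅ ∩ P).Nonempty →
    (rev C P).getD 0 ∅ = C.getD 0 ∅ ∩ P ∧
    (rev C P).getD 1 ∅ = C.getD 0 ∅ \ P)

lemma foldr_union_append (A B : List (Set M)) :
    (A ++ B).foldr (· ∪ ·) ∅ = A.foldr (· ∪ ·) ∅ ∪ B.foldr (· ∪ ·) ∅ := by
  induction A with
  | nil => simp
  | cons X A ih => simp [ih, Set.union_assoc]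

lemma foldr_union_map_inter (C : List (Set M)) (L : Set M) :
    (C.map (· ∩ L)).foldr (· ∪ ·) ∅ = C.foldr (· ∪ ·) ∅ ∩ L := by
  induction C with
  | nil => simp
  | cons X C ih => simp [ih, Set.union_inter_distrib_right]

lemma foldr_union_map_diff (C : List (Set M)) (L : Set M) :
    (C.map (· \ L)).foldr (· ∪ ·) ∅ = C.foldr (· ∪ ·) ∅ \ L := by
  induction C with
  | nil => simp
  | cons X C ih => simp [ih, Set.union_diff_distrib]

lemma foldr_union_lex (C : List (Set M)) (L : Set M) :
    (lex C L).foldr (· ∪ ·) ∅ = C.foldr (· ∪ ·) ∅ := by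
  rw [lex, foldr_union_append, foldr_union_map_inter, foldr_union_map_diff,
    Set.inter_union_diff]

lemma foldr_union_foldl_lex (Ls C0 : List (Set M))
    (h : C0.foldr (· ∪ ·) ∅ = Set.univ) :
    (Ls.foldl lex C0).foldr (· ∪ ·) ∅ = Set.univ := by
  induction Ls generalizing C0 with
  | nil => simpa using h
  | cons L Ls ih =>
    simp only [List.foldl_cons]
    exact ih _ (by rw [foldr_union_lex]; exact h)

lemma upTo_map_inter (C : List (Set M)) (L S : Set M) :
    upTo (C.map (· ∩ L)) S = upTo C (S ∩ L) ∩ L := by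
  induction C with
  | nil => simp [upTo]
  | cons X C ih =>
    have h : (X ∩ L ∩ S) = (X ∩ (S ∩ L)) := by ext x; simp; tauto
    simp only [List.map_cons, upTo, h, ih]
    split <;> simp [Set.union_inter_distrib_right]

lemma upTo_map_diff (C : List (Set M)) (L S : Set M) :
    upTo (C.map (· \ L)) S = upTo C (S \ L) \ L := by
  induction C with
  | nil => simp [upTo]
  | cons X C ih =>
    have h : (X \ L ∩ S) = (X ∩ (S \ L)) := by ext x; simp; tauto
    simp only [List.map_cons, upTo, h, ih]
    split <;> simp [Set.union_diff_distrib]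

lemma upTo_append (A B : List (Set M)) (S : Set M) :
    upTo (A ++ B) S =
      if (A.foldr (· ∪ ·) ∅ ∩ S).Nonempty then upTo A S
      else A.foldr (· ∪ ·) ∅ ∪ upTo B S := by
  induction A with
  | nil => simp [upTo]
  | cons X A ih =>
    simp only [List.cons_append, upTo]
    rw [ih, List.foldr_cons]
    by_cases hX : (X ∩ S).Nonempty
    · rw [if_pos hX, if_pos hX, if_pos]
      exact hX.mono (Set.inter_subset_inter_left _ Set.subset_union_left)
    · have hXe : X ∩ S = ∅ := Set.not_nonempty_iff_eq_empty.mp hX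
      have hcond : ((X ∪ A.foldr (· ∪ ·) ∅) ∩ S).Nonempty ↔
          (A.foldr (· ∪ ·) ∅ ∩ S).Nonempty := by
        rw [Set.union_inter_distrib_right, hXe, Set.empty_union]
      rw [if_neg hX, if_neg hX]
      by_cases hA : (A.foldr (· ∪ ·) ∅ ∩ S).Nonempty
      · rw [if_pos hA, if_pos (hcond.mpr hA)]
      · rw [if_neg hA, if_neg (fun hc => hA (hcond.mp hc)), Set.union_assoc]

lemma upTo_lex (C : List (Set M)) (L S : Set M)
    (hC : C.foldr (· ∪ ·) ∅ = Set.univ) :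
    upTo (lex C L) S =
      if (S ∩ L).Nonempty then upTo C (S ∩ L) ∩ L else L ∪ upTo C S := by
  rw [lex, upTo_append, foldr_union_map_inter, hC, Set.univ_inter,
    upTo_map_inter, upTo_map_diff]
  by_cases h : (S ∩ L).Nonempty
  · rw [if_pos (by rwa [Set.inter_comm]), if_pos h]
  · have he : S ∩ L = ∅ := Set.not_nonempty_iff_eq_empty.mp h
    have hSL : S \ L = S := by ext x; simp only [Set.mem_diff]
                               constructor
                               · exact fun hx => hx.1
                               · intro hx
                                 exact ⟨hx, fun hl => Set.eq_empty_iff_forall_notMem.mp he x ⟨hx, hl⟩⟩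
    rw [if_neg (by rwa [Set.inter_comm]), if_neg h, hSL, Set.union_diff_self]

/-- The underformula characterizes the union of the classes of
`∅ lex(L₁)...lex(Lₙ)` up to the first class containing models of `S`. -/
theorem upTo_eq_under (Ls : List (Set M)) (S : Set M) (hS : S.Nonempty) :
    upTo (Ls.foldl lex [Set.univ]) S = under S Ls.reverse := by
  induction Ls using List.reverseRecOn generalizing S with
  | nil =>
    simp only [List.foldl_nil, List.reverse_nil, upTo, under]
    rw [if_pos (by simpa using hS)]
  | append_singleton Ms L ih =>
    rw [List.foldl_append, List.foldl_cons, List.foldl_nil,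
      upTo_lex _ _ _ (foldr_union_foldl_lex Ms _ (by simp)),
      List.reverse_append, List.reverse_singleton, List.singleton_append, under]
    by_cases h : (S ∩ L).Nonempty
    · rw [if_pos h, if_pos h, ih _ h, Set.inter_comm]
    · rw [if_neg h, if_neg h, ih _ hS]

end BeliefRevision
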